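/- Let F = ℕ^n, let x = (r_1,...,r_n) and y = (s_1,...,s_n) in F, and let ∼ be the monoid congruence generated by (x,y). If there exists a ∈ F and c ∈ F with c ≠ 0 such that a ∼ a + c, then either x < y or y < x in the componentwise order. -/

import Mathlib

/-- A linear evaluation map `u ↦ α * u i + β * u j + γ * u k` as an `AddMonoidHom`. -/
def evalLin {n : ℕ} (α β γ : ℕ) (i j k : Fin n) : (Fin n → ℕ) →+ ℕ where
  toFun u := α * u i + β * u j + γ * u k
  map_zero' := by simp
  map_add' u v := by simp [Pi.add_apply]; ring

/-- Let `F = ℕ^n`, `x = (r_1,…,r_n)`, `y = (s_1,…,s_n)` in `F`, and let `∼` be the monoid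
congruence generated by `(x, y)`.  If there exist `a ∈ F` and `c ∈ F` with `c ≠ 0` such
that `a ∼ a + c`, then either `x < y` or `y < x` in the componentwise order. -/
theorem stmt_3 (n : ℕ) (x y a c : Fin n → ℕ) (hc : c ≠ 0)
    (h : addConGen (fun u v : Fin n → ℕ => u = x ∧ v = y) a (a + c)) :
    x < y ∨ y < x := by
  by_contra hcon
  push_neg at hcon
  obtain ⟨hxy, hyx⟩ := hcon
  -- any additive hom identifying x and y must kill c
  have key : ∀ f : (Fin n → ℕ) →+ ℕ, f x = f y → f c = 0 := by
    intro f hf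
    have hle : addConGen (fun u v : Fin n → ℕ => u = x ∧ v = y) ≤ AddCon.ker f := by
      apply AddCon.addConGen_le.mpr
      rintro u v ⟨rfl, rfl⟩
      exact hf
    have h2 : f a = f (a + c) := hle h
    rw [map_add] at h2
    omega
  obtain ⟨k0, hk0⟩ : ∃ k, c k ≠ 0 := Function.ne_iff.mp hc
  by_cases hxy0 : x = y
  · apply hk0
    have := key (evalLin 0 0 1 k0 k0 k0) (by rw [hxy0])
    simpa [evalLin] using this
  · -- get indices where x and y go in opposite directions
    have hnxy : ¬ x ≤ y := fun hle => hxy (lt_iff_le_and_ne.mpr ⟨hle, hxy0⟩)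
    have hnyx : ¬ y ≤ x := fun hle => hyx (lt_iff_le_and_ne.mpr ⟨hle, Ne.symm hxy0⟩)
    rw [Pi.le_def] at hnxy hnyx
    push_neg at hnxy hnyx
    obtain ⟨i, hi⟩ := hnxy  -- y i < x i
    obtain ⟨j, hj⟩ := hnyx  -- x j < y j
    obtain ⟨di, hdi⟩ : ∃ d, x i = y i + (d + 1) := ⟨x i - y i - 1, by omega⟩
    obtain ⟨D, hD⟩ : ∃ d, y j = x j + (d + 1) := ⟨y j - x j - 1, by omega⟩
    set p := x k0 - y k0 with hp
    set m := y k0 - x k0 with hm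
    have hpm : x k0 + m = y k0 + p := by omega
    -- coefficients
    set α := (D + 1) * (1 + m) with hα
    set β := (di + 1) * (1 + p) with hβ
    set γ := (di + 1) * (D + 1) with hγ
    have hf : (evalLin α β γ i j k0) x = (evalLin α β γ i j k0) y := by
      show α * x i + β * x j + γ * x k0 = α * y i + β * y j + γ * y k0
      zify
      have h1 : (x i : ℤ) = y i + (di + 1) := by exact_mod_cast hdi
      have h2 : (y j : ℤ) = x j + (D + 1) := by exact_mod_cast hD
      have h3 : (x k0 : ℤ) + m = y k0 + p := by exact_mod_cast hpm
      have hα' : (α : ℤ) = (D + 1) * (1 + m) := by push_cast [hα]; ring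
      have hβ' : (β : ℤ) = (di + 1) * (1 + p) := by push_cast [hβ]; ring
      have hγ' : (γ : ℤ) = (di + 1) * (D + 1) := by push_cast [hγ]; ring
      rw [hα', hβ', hγ']
      linear_combination ((D:ℤ) + 1) * (1 + m) * h1 - ((di:ℤ) + 1) * (1 + p) * h2
        + ((di:ℤ) + 1) * ((D:ℤ) + 1) * h3
    have hfc := key _ hf
    have hfc' : α * c i + β * c j + γ * c k0 = 0 := hfc
    have hγ0 : γ * c k0 = 0 := by omega
    rcases Nat.mul_eq_zero.mp hγ0 with h' | h'
    · rcases Nat.mul_eq_zero.mp (hγ ▸ h') with h'' | h'' <;> omega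
    · exact hk0 h'
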